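/- Let p̃ ∈ [0,1] and φ > 1 be real numbers. Let ξ be a {0,1}-valued process adapted to the filtration (𝓕_i) such that for every i ∈ ℕ, P(ξ(i+1) = 1 ∣ 𝓕_i) ≤ p̃ almost surely. Then for every s ≥ 1 and every strictly increasing finite sequence of indices 0 ≤ i₁ < i₂ < ⋯ < i_s in ℕ, the expectation satisfies E[ φ^{ ∑_{j=1}^{s} ξ(i_j) } ] ≤ φ · ( (φ−1)·p̃ + 1 )^{s−1}. -/

import Mathlib

open MeasureTheory Filter

section Aux

variable {Ω : Type*} [MeasurableSpace Ω] (μ : Measure Ω) [IsProbabilityMeasure μ]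
  (ℱ : Filtration ℕ (inferInstance : MeasurableSpace Ω))
  {ptil : ℝ} {φ : ℝ} {ξ : ℕ → Ω → ℝ}

lemma aux_factor_mem (hφ : 1 < φ) (hξ01 : ∀ i ω, ξ i ω = 0 ∨ ξ i ω = 1) (k : ℕ) (ω : Ω) :
    (φ - 1) * ξ k ω + 1 = 1 ∨ (φ - 1) * ξ k ω + 1 = φ := by
  rcases hξ01 k ω with h | h <;> simp [h]

lemma aux_factor_bounds (hφ : 1 < φ) (hξ01 : ∀ i ω, ξ i ω = 0 ∨ ξ i ω = 1) (k : ℕ) (ω : Ω) :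
    1 ≤ (φ - 1) * ξ k ω + 1 ∧ (φ - 1) * ξ k ω + 1 ≤ φ := by
  rcases aux_factor_mem hφ hξ01 k ω with h | h <;> rw [h] <;> constructor <;> linarith

lemma aux_prod_bounds (hφ : 1 < φ) (hξ01 : ∀ i ω, ξ i ω = 0 ∨ ξ i ω = 1)
    {k : ℕ} (idx : Fin k → ℕ) (ω : Ω) :
    1 ≤ ∏ j : Fin k, ((φ - 1) * ξ (idx j) ω + 1) ∧
      ∏ j : Fin k, ((φ - 1) * ξ (idx j) ω + 1) ≤ φ ^ k := by
  constructor
  · calc (1:ℝ) = ∏ _j : Fin k, (1:ℝ) := by simp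
      _ ≤ ∏ j : Fin k, ((φ - 1) * ξ (idx j) ω + 1) :=
        Finset.prod_le_prod (by simp) (fun j _ => (aux_factor_bounds hφ hξ01 (idx j) ω).1)
  · calc ∏ j : Fin k, ((φ - 1) * ξ (idx j) ω + 1) ≤ ∏ _j : Fin k, φ :=
        Finset.prod_le_prod (fun j _ => by linarith [(aux_factor_bounds hφ hξ01 (idx j) ω).1])
          (fun j _ => (aux_factor_bounds hφ hξ01 (idx j) ω).2)
      _ = φ ^ k := by simp

lemma aux_meas (hadapted : Adapted ℱ ξ) (k : ℕ) : Measurable (ξ k) :=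
  (hadapted k).mono (ℱ.le k) le_rfl

lemma aux_int_prod (hφ : 1 < φ) (hξ01 : ∀ i ω, ξ i ω = 0 ∨ ξ i ω = 1)
    (hadapted : Adapted ℱ ξ) {k : ℕ} (idx : Fin k → ℕ) :
    Integrable (fun ω => ∏ j : Fin k, ((φ - 1) * ξ (idx j) ω + 1)) μ := by
  have hmeas : Measurable fun ω => ∏ j : Fin k, ((φ - 1) * ξ (idx j) ω + 1) := by
    apply Finset.measurable_prod
    intro j _
    exact ((aux_meas ℱ hadapted (idx j)).const_mul _).add_const 1
  refine (integrable_const (φ ^ k)).mono' hmeas.aestronglyMeasurable ?_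
  filter_upwards with ω
  have h := aux_prod_bounds hφ hξ01 idx ω
  rw [Real.norm_eq_abs, abs_of_nonneg (by linarith [h.1])]
  exact h.2

/-- Main inductive estimate. -/
lemma aux_main (hp : ptil ∈ Set.Icc (0 : ℝ) 1) (hφ : 1 < φ)
    (hξ01 : ∀ i ω, ξ i ω = 0 ∨ ξ i ω = 1) (hadapted : Adapted ℱ ξ)
    (hcond : ∀ i, (μ[Set.indicator {ω | ξ (i + 1) ω = 1} (fun _ => (1 : ℝ)) | ℱ i])
      ≤ᵐ[μ] fun _ => ptil) :
    ∀ n : ℕ, ∀ idx : Fin (n + 1) → ℕ, StrictMono idx →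
      (∫ ω, ∏ j : Fin (n + 1), ((φ - 1) * ξ (idx j) ω + 1) ∂μ)
        ≤ φ * ((φ - 1) * ptil + 1) ^ n := by
  intro n
  induction n with
  | zero =>
    intro idx _
    simp only [pow_zero, mul_one]
    calc (∫ ω, ∏ j : Fin 1, ((φ - 1) * ξ (idx j) ω + 1) ∂μ)
        ≤ ∫ _ω, φ ∂μ := by
          refine integral_mono (aux_int_prod μ ℱ hφ hξ01 hadapted idx) (integrable_const φ) ?_
          intro ω
          simpa using (aux_prod_bounds hφ hξ01 idx ω).2
      _ = φ := by simp
  | succ n IH =>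
    intro idx hidx
    set c : ℝ := (φ - 1) * ptil + 1 with hc
    have hc1 : 1 ≤ c := by
      have := hp.1; nlinarith
    set m : ℕ := idx (Fin.last (n + 1)) with hm
    have hm1 : 1 ≤ m := by
      have h0 : idx 0 < idx (Fin.last (n + 1)) := hidx (by
        simp [Fin.lt_def])
      omega
    have hmsub : m - 1 + 1 = m := Nat.succ_pred_eq_of_pos hm1
    set F : Ω → ℝ := fun ω => ∏ j : Fin (n + 1), ((φ - 1) * ξ (idx j.castSucc) ω + 1) with hF
    set Y : Ω → ℝ := fun ω => (φ - 1) * ξ m ω + 1 with hY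
    have hsplit : ∀ ω, (∏ j : Fin (n + 2), ((φ - 1) * ξ (idx j) ω + 1)) = F ω * Y ω := by
      intro ω
      rw [Fin.prod_univ_castSucc]
    -- measurability of F w.r.t. ℱ (m-1)
    have hFmeas : StronglyMeasurable[ℱ (m - 1)] F := by
      apply Measurable.stronglyMeasurable
      apply Finset.measurable_prod
      intro j _
      have hjm : idx j.castSucc ≤ m - 1 := by
        have : idx j.castSucc < m := hidx (Fin.castSucc_lt_last j)
        omega
      exact (((hadapted (idx j.castSucc)).mono (ℱ.mono hjm) le_rfl).const_mul _).add_const 1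
    -- integrabilities
    have hFY_int : Integrable (F * Y) μ := by
      have := aux_int_prod μ ℱ hφ hξ01 hadapted idx (k := n + 2)
      refine this.congr ?_
      filter_upwards with ω using (hsplit ω)
    have hY_int : Integrable Y μ := by
      have hmeas : Measurable Y := ((aux_meas ℱ hadapted m).const_mul _).add_const 1
      refine (integrable_const φ).mono' hmeas.aestronglyMeasurable ?_
      filter_upwards with ω
      simp only [hY]
      rw [Real.norm_eq_abs, abs_of_nonneg (by linarith [(aux_factor_bounds hφ hξ01 m ω).1])]
      exact (aux_factor_bounds hφ hξ01 m ω).2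
    have hF_int : Integrable F μ := aux_int_prod μ ℱ hφ hξ01 hadapted _
    -- conditional expectation bound on Y
    have hYeq : Y = (φ - 1) • Set.indicator {ω | ξ m ω = 1} (fun _ => (1 : ℝ))
        + fun _ => (1 : ℝ) := by
      funext ω
      simp only [Pi.add_apply, Pi.smul_apply, smul_eq_mul]
      rcases hξ01 m ω with h | h
      · simp [hY, h, Set.indicator_apply, Set.mem_setOf_eq]
      · simp [hY, h, Set.indicator_apply, Set.mem_setOf_eq]
    have hI_int : Integrable (Set.indicator {ω | ξ m ω = 1} (fun _ => (1 : ℝ))) μ :=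
      (integrable_const (1 : ℝ)).indicator ((aux_meas ℱ hadapted m) (measurableSet_singleton 1))
    have hcondY : μ[Y | ℱ (m - 1)] ≤ᵐ[μ] fun _ => c := by
      have h1 : μ[Y | ℱ (m - 1)] =ᵐ[μ]
          μ[(φ - 1) • Set.indicator {ω | ξ m ω = 1} (fun _ => (1 : ℝ)) | ℱ (m - 1)]
            + μ[(fun _ => (1 : ℝ)) | ℱ (m - 1)] := by
        rw [hYeq]
        exact condExp_add (hI_int.smul (φ - 1)) (integrable_const 1) _
      have h2 := condExp_smul (μ := μ) (m := ℱ (m - 1)) (φ - 1)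
        (Set.indicator {ω | ξ m ω = 1} (fun _ => (1 : ℝ)))
      have h3 : μ[(fun _ => (1 : ℝ)) | ℱ (m - 1)] = fun _ => (1 : ℝ) :=
        condExp_const (ℱ.le (m - 1)) 1
      have h4 := hcond (m - 1)
      rw [hmsub] at h4
      filter_upwards [h1, h2, h4] with ω hω1 hω2 hω4
      rw [hω1]
      simp only [Pi.add_apply, h3]
      rw [hω2]
      simp only [Pi.smul_apply, smul_eq_mul]
      have : (φ - 1) * (μ[Set.indicator {ω | ξ m ω = 1} (fun _ => (1 : ℝ)) | ℱ (m - 1)]) ω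
          ≤ (φ - 1) * ptil := by
        apply mul_le_mul_of_nonneg_left hω4 (by linarith)
      simp only [hc]
      linarith
    -- the pull-out computation
    have hFpos : ∀ ω, 0 ≤ F ω := fun ω => by
      linarith [(aux_prod_bounds hφ hξ01 (fun j : Fin (n+1) => idx j.castSucc) ω).1]
    have key : (∫ ω, F ω * Y ω ∂μ) = ∫ ω, F ω * (μ[Y | ℱ (m - 1)]) ω ∂μ := by
      have h1 : (∫ ω, F ω * Y ω ∂μ) = ∫ ω, (μ[F * Y | ℱ (m - 1)]) ω ∂μ :=
        (integral_condExp (ℱ.le (m - 1))).symm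
      have h2 : μ[F * Y | ℱ (m - 1)] =ᵐ[μ] F * μ[Y | ℱ (m - 1)] :=
        condExp_mul_of_stronglyMeasurable_left hFmeas hFY_int hY_int
      rw [h1, integral_congr_ae h2]
      rfl
    have hFcond_int : Integrable (fun ω => F ω * (μ[Y | ℱ (m - 1)]) ω) μ := by
      refine (integrable_condExp).bdd_mul (c := φ ^ (n + 1)) ?_ (ae_of_all _ fun ω => ?_)
      · exact (hFmeas.mono (ℱ.le _)).aestronglyMeasurable
      · rw [Real.norm_eq_abs, abs_of_nonneg (hFpos ω)]
        exact (aux_prod_bounds hφ hξ01 (fun j : Fin (n+1) => idx j.castSucc) ω).2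
    calc (∫ ω, ∏ j : Fin (n + 2), ((φ - 1) * ξ (idx j) ω + 1) ∂μ)
        = ∫ ω, F ω * Y ω ∂μ := by
          apply integral_congr_ae
          filter_upwards with ω using hsplit ω
      _ = ∫ ω, F ω * (μ[Y | ℱ (m - 1)]) ω ∂μ := key
      _ ≤ ∫ ω, F ω * c ∂μ := by
          refine integral_mono_ae hFcond_int (hF_int.mul_const c) ?_
          filter_upwards [hcondY] with ω hω
          exact mul_le_mul_of_nonneg_left hω (hFpos ω)
      _ = c * ∫ ω, F ω ∂μ := by rw [← integral_const_mul]; congr 1; funext ω; ring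
      _ ≤ c * (φ * c ^ n) := by
          refine mul_le_mul_of_nonneg_left ?_ (by linarith)
          exact IH (fun j => idx j.castSucc) (hidx.comp Fin.strictMono_castSucc)
      _ = φ * c ^ (n + 1) := by ring

end Aux

/-- Lemma 6, Appendix: for a {0,1}-valued process `ξ` adapted to
`(𝓕_i)` with conditional transition probability into state 1 bounded by
`p̃ ∈ [0,1]`, and any `φ > 1`, for every `s ≥ 1` and strictly increasing indices
`i₁ < ⋯ < i_s` one has `E[φ^{∑_j ξ(i_j)}] ≤ φ((φ−1)p̃+1)^{s−1}`. -/
theorem expectation_product_bound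
    {Ω : Type*} [MeasurableSpace Ω] (μ : Measure Ω) [IsProbabilityMeasure μ]
    (ℱ : Filtration ℕ (inferInstance : MeasurableSpace Ω))
    (ptil : ℝ) (hp : ptil ∈ Set.Icc (0 : ℝ) 1)
    (φ : ℝ) (hφ : 1 < φ)
    (ξ : ℕ → Ω → ℝ)
    (hξ01 : ∀ i ω, ξ i ω = 0 ∨ ξ i ω = 1)
    (hadapted : Adapted ℱ ξ)
    (hcond : ∀ i, (μ[Set.indicator {ω | ξ (i + 1) ω = 1} (fun _ => (1 : ℝ)) | ℱ i])
      ≤ᵐ[μ] fun _ => ptil)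
    (s : ℕ) (hs : 1 ≤ s)
    (idx : Fin s → ℕ) (hidx : StrictMono idx) :
    (∫ ω, φ ^ (∑ j : Fin s, ξ (idx j) ω) ∂μ)
      ≤ φ * ((φ - 1) * ptil + 1) ^ (s - 1) := by
  obtain ⟨n, rfl⟩ : ∃ n, s = n + 1 := ⟨s - 1, by omega⟩
  have hφ0 : (0 : ℝ) < φ := by linarith
  have hrw : ∀ ω, φ ^ (∑ j : Fin (n + 1), ξ (idx j) ω)
      = ∏ j : Fin (n + 1), ((φ - 1) * ξ (idx j) ω + 1) := by
    intro ω
    have : ∀ (t : Finset (Fin (n + 1))),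
        φ ^ (∑ j ∈ t, ξ (idx j) ω) = ∏ j ∈ t, ((φ - 1) * ξ (idx j) ω + 1) := by
      intro t
      induction t using Finset.cons_induction with
      | empty => simp [Real.rpow_zero]
      | cons a t ha ih =>
        rw [Finset.sum_cons, Finset.prod_cons, Real.rpow_add hφ0, ih]
        congr 1
        rcases hξ01 (idx a) ω with h | h
        · simp [h]
        · simp [h]
    exact this Finset.univ
  have := aux_main μ ℱ hp hφ hξ01 hadapted hcond n idx hidx
  simpa only [Nat.add_sub_cancel, hrw] using this
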